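/- Let 1 ≤ p < ∞, σ a locally finite Borel measure on ℝⁿ, and 𝓕 a σ-sparse collection of dyadic cubes. For each F ∈ 𝓕 let a_F be a nonnegative measurable function supported on F and constant on each cube F' ∈ ch_𝓕(F) (the maximal cubes of 𝓕 strictly contained in F). Then (∑_{F ∈ 𝓕} ‖a_F‖_{L^p(σ)}^p)^{1/p} ≤ ‖∑_{F ∈ 𝓕} a_F‖_{L^p(σ)} ≤ 3p (∑_{F ∈ 𝓕} ‖a_F‖_{L^p(σ)}^p)^{1/p}. -/

import Mathlib

open MeasureTheory ENNReal Set

noncomputable section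

def DyadicCube (n : ℕ) (k : ℤ) (j : Fin n → ℤ) : Set (Fin n → ℝ) :=
  {x | ∀ i, (j i : ℝ) / 2 ^ k ≤ x i ∧ x i < ((j i : ℝ) + 1) / 2 ^ k}

def IsDyadicCube {n : ℕ} (Q : Set (Fin n → ℝ)) : Prop :=
  ∃ k j, Q = DyadicCube n k j

/-- `F'` is a child of `F` in the family `𝓕`: a maximal cube of `𝓕` strictly contained in `F`. -/
def IsChild {n : ℕ} (𝓕 : Set (Set (Fin n → ℝ))) (F F' : Set (Fin n → ℝ)) : Prop :=
  F' ∈ 𝓕 ∧ F' ⊂ F ∧ ∀ F'' ∈ 𝓕, F' ⊆ F'' → F'' ⊂ F → F'' = F'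

lemma two_zpow_pos (k : ℤ) : (0:ℝ) < 2 ^ k := zpow_pos (by norm_num) k

lemma mem_dyadicCube_iff {n : ℕ} {k : ℤ} {j : Fin n → ℤ} {x : Fin n → ℝ} :
    x ∈ DyadicCube n k j ↔ ∀ i, ⌊x i * 2 ^ k⌋ = j i := by
  have h2k := two_zpow_pos k
  constructor
  · intro hx i
    obtain ⟨h1, h2⟩ := hx i
    rw [Int.floor_eq_iff]
    have e1 : (j i : ℝ) ≤ x i * 2 ^ k := by rw [← div_le_iff₀ h2k]; exact h1
    have e2 : x i * 2 ^ k < (j i : ℝ) + 1 := by rw [← lt_div_iff₀ h2k]; exact h2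
    exact ⟨e1, e2⟩
  · intro hx i
    have := (Int.floor_eq_iff).mp (hx i)
    constructor
    · rw [div_le_iff₀ h2k]; exact this.1
    · rw [lt_div_iff₀ h2k]; exact this.2

lemma floor_div_int' (r : ℝ) (m : ℤ) (hm : 0 < m) : ⌊r / (m:ℝ)⌋ = ⌊r⌋ / m := by
  have hm' : (0:ℝ) < (m:ℝ) := by exact_mod_cast hm
  rw [Int.floor_eq_iff]
  constructor
  · rw [le_div_iff₀ hm']
    have h1 : ((⌊r⌋ / m : ℤ) : ℝ) * (m:ℝ) ≤ (⌊r⌋ : ℝ) := by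
      exact_mod_cast Int.ediv_mul_le ⌊r⌋ hm.ne'
    exact h1.trans (Int.floor_le r)
  · rw [div_lt_iff₀ hm']
    have h2 : ((⌊r⌋ : ℤ) + 1 : ℝ) ≤ ((⌊r⌋ / m + 1 : ℤ) : ℝ) * (m:ℝ) := by
      exact_mod_cast Int.lt_iff_add_one_le.mp (Int.lt_ediv_add_one_mul_self ⌊r⌋ hm)
    have := Int.lt_floor_add_one r
    push_cast at h2 ⊢
    linarith

lemma floor_mul_zpow_eq {k k' : ℤ} (hk : k ≤ k') {s t : ℝ}
    (h : ⌊s * 2 ^ k'⌋ = ⌊t * 2 ^ k'⌋) : ⌊s * 2 ^ k⌋ = ⌊t * 2 ^ k⌋ := by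
  set m : ℕ := (k' - k).toNat with hm
  have hmk : k + (m:ℤ) = k' := by simp [hm]; omega
  have h2m : (0:ℤ) < 2 ^ m := by positivity
  have key : ∀ u : ℝ, u * 2 ^ k = (u * 2 ^ k') / (((2:ℤ) ^ m : ℤ) : ℝ) := by
    intro u
    have h2 : (2:ℝ) ^ k' = 2 ^ k * 2 ^ (m:ℤ) := by
      rw [← zpow_add₀ (by norm_num : (2:ℝ) ≠ 0), hmk]
    have h3 : (((2:ℤ) ^ m : ℤ) : ℝ) = (2:ℝ) ^ (m:ℤ) := by
      push_cast [zpow_natCast]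
      norm_num
    rw [h2, h3]
    have : (2:ℝ) ^ (m:ℤ) ≠ 0 := (zpow_pos (by norm_num : (0:ℝ) < 2) _).ne'
    field_simp
  rw [key s, key t, floor_div_int' _ _ h2m, floor_div_int' _ _ h2m, h]

lemma dyadicCube_subset_of_le {n : ℕ} {k k' : ℤ} (hk : k ≤ k') {j : Fin n → ℤ} {j' : Fin n → ℤ}
    {x : Fin n → ℝ} (hx : x ∈ DyadicCube n k j) (hx' : x ∈ DyadicCube n k' j') :
    DyadicCube n k' j' ⊆ DyadicCube n k j := by
  intro y hy
  rw [mem_dyadicCube_iff] at hx hx' hy ⊢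
  intro i
  rw [← hx i]
  exact floor_mul_zpow_eq hk (by rw [hy i, hx' i])

lemma dyadicCube_nonempty (n : ℕ) (k : ℤ) (j : Fin n → ℤ) : (DyadicCube n k j).Nonempty := by
  refine ⟨fun i => (j i : ℝ) / 2 ^ k, fun i => ⟨le_refl _, ?_⟩⟩
  have h2k := two_zpow_pos k
  rw [div_lt_div_iff_of_pos_right h2k]
  linarith

lemma IsDyadicCube.subset_or_subset {n : ℕ} {Q Q' : Set (Fin n → ℝ)} (hQ : IsDyadicCube Q)
    (hQ' : IsDyadicCube Q') (h : (Q ∩ Q').Nonempty) : Q ⊆ Q' ∨ Q' ⊆ Q := by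
  obtain ⟨k, j, rfl⟩ := hQ; obtain ⟨k', j', rfl⟩ := hQ'
  obtain ⟨x, hx, hx'⟩ := h
  rcases le_total k k' with hk | hk
  · exact Or.inr (dyadicCube_subset_of_le hk hx hx')
  · exact Or.inl (dyadicCube_subset_of_le hk hx' hx)

lemma IsDyadicCube.nonempty {n : ℕ} {Q : Set (Fin n → ℝ)} (hQ : IsDyadicCube Q) : Q.Nonempty := by
  obtain ⟨k, j, rfl⟩ := hQ; exact dyadicCube_nonempty n k j

lemma scale_lt_of_ssubset {n : ℕ} {k k' : ℤ} {j : Fin n → ℤ} {j' : Fin n → ℤ}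
    (h : DyadicCube n k' j' ⊂ DyadicCube n k j) : k < k' := by
  by_contra hc
  push_neg at hc
  obtain ⟨x, hx⟩ := dyadicCube_nonempty n k' j'
  exact h.not_subset (dyadicCube_subset_of_le hc hx (h.subset hx))

lemma exists_child {n : ℕ} {𝓕 : Set (Set (Fin n → ℝ))} (h𝓕 : ∀ F ∈ 𝓕, IsDyadicCube F)
    {F G : Set (Fin n → ℝ)} (hF : F ∈ 𝓕) (hG : G ∈ 𝓕) (hGF : G ⊂ F) :
    ∃ M, IsChild 𝓕 F M ∧ G ⊆ M := by
  obtain ⟨x₀, hx₀⟩ : G.Nonempty := (h𝓕 G hG).nonempty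
  obtain ⟨kF, jF, hFd⟩ := h𝓕 F hF
  -- canonical cube at scale k through x₀
  set C : ℤ → Set (Fin n → ℝ) := fun k => DyadicCube n k (fun i => ⌊x₀ i * 2 ^ k⌋) with hC
  have hxC : ∀ k, x₀ ∈ C k := fun k => mem_dyadicCube_iff.mpr fun i => rfl
  have hcanon : ∀ H ∈ 𝓕, x₀ ∈ H → ∃ k, H = C k := by
    intro H hH hxH
    obtain ⟨k, j, rfl⟩ := h𝓕 H hH
    refine ⟨k, ?_⟩
    have hj : j = fun i => ⌊x₀ i * 2 ^ k⌋ :=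
      funext fun i => (mem_dyadicCube_iff.mp hxH i).symm
    exact congrArg (DyadicCube n k) hj
  set P : ℤ → Prop := fun k => C k ∈ 𝓕 ∧ G ⊆ C k ∧ C k ⊂ F with hP
  have hbdd : ∃ b, ∀ z, P z → b ≤ z := by
    refine ⟨kF, fun z hz => ?_⟩
    have := hz.2.2
    rw [hFd] at this
    exact (scale_lt_of_ssubset this).le
  have hex : ∃ z, P z := by
    obtain ⟨kG, hkG⟩ := hcanon G hG hx₀
    refine ⟨kG, ?_⟩
    simp only [hP]
    rw [← hkG]
    exact ⟨hG, subset_rfl, hGF⟩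
  obtain ⟨k₀, hk₀, hleast⟩ := Int.exists_least_of_bdd hbdd hex
  refine ⟨C k₀, ⟨hk₀.1, hk₀.2.2, ?_⟩, hk₀.2.1⟩
  intro F'' hF'' hsub hss
  obtain ⟨k'', hk''⟩ := hcanon F'' hF'' (hsub (hxC k₀))
  have hP'' : P k'' := by
    simp only [hP]
    rw [← hk'']
    exact ⟨hF'', hk₀.2.1.trans hsub, hss⟩
  have hle := hleast k'' hP''
  subst hk''
  exact le_antisymm (dyadicCube_subset_of_le hle (hxC k₀) (hxC k'')) hsub

lemma parent_unique {n : ℕ} {𝓕 : Set (Set (Fin n → ℝ))} (h𝓕 : ∀ F ∈ 𝓕, IsDyadicCube F)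
    {F₁ F₂ G : Set (Fin n → ℝ)} (h1 : F₁ ∈ 𝓕) (h2 : F₂ ∈ 𝓕)
    (hc1 : IsChild 𝓕 F₁ G) (hc2 : IsChild 𝓕 F₂ G) : F₁ = F₂ := by
  have hGne : G.Nonempty := (h𝓕 G hc1.1).nonempty
  have hne : (F₁ ∩ F₂).Nonempty := hGne.mono (subset_inter hc1.2.1.subset hc2.2.1.subset)
  rcases (h𝓕 F₁ h1).subset_or_subset (h𝓕 F₂ h2) hne with hsub | hsub
  · rcases eq_or_ssubset_of_subset hsub with heq | hss
    · exact heq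
    · exact absurd (hc2.2.2 F₁ h1 hc1.2.1.subset hss) hc1.2.1.ne'
  · rcases eq_or_ssubset_of_subset hsub with heq | hss
    · exact heq.symm
    · exact absurd (hc1.2.2 F₂ h2 hc2.2.1.subset hss) hc2.2.1.ne'

lemma children_disjoint {n : ℕ} {𝓕 : Set (Set (Fin n → ℝ))} (h𝓕 : ∀ F ∈ 𝓕, IsDyadicCube F)
    {F G₁ G₂ : Set (Fin n → ℝ)} (hc1 : IsChild 𝓕 F G₁) (hc2 : IsChild 𝓕 F G₂)
    (hne : G₁ ≠ G₂) : Disjoint G₁ G₂ := by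
  rw [Set.disjoint_left]
  intro x hx1 hx2
  have hint : (G₁ ∩ G₂).Nonempty := ⟨x, hx1, hx2⟩
  rcases (h𝓕 G₁ hc1.1).subset_or_subset (h𝓕 G₂ hc2.1) hint with hsub | hsub
  · exact hne (hc1.2.2 G₂ hc2.1 hsub hc2.2.1).symm
  · exact hne (hc2.2.2 G₁ hc1.1 hsub hc1.2.1)

lemma key_real {p : ℝ} (hp : 1 ≤ p) {A B : ℝ} (hA : 0 ≤ A) (hB : 0 ≤ B) :
    (A + B) ^ p ≤ A ^ p + p * (B * (A + B) ^ (p - 1)) := by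
  rcases eq_or_lt_of_le (by positivity : (0:ℝ) ≤ A + B) with h0 | h0
  · have hA0 : A = 0 := by linarith
    have hB0 : B = 0 := by linarith
    subst hA0; subst hB0
    simp [Real.zero_rpow (by linarith : p ≠ 0)]
  · set S := A + B with hS
    have htS : B / S ≤ 1 := by
      rw [div_le_one h0]; linarith
    have htS0 : 0 ≤ B / S := div_nonneg hB h0.le
    have bern := one_add_mul_self_le_rpow_one_add (s := -(B/S)) (by linarith) hp
    have h1 : (1: ℝ) + -(B/S) = A/S := by
      have hSne : S ≠ 0 := h0.ne'
      field_simp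
      linarith
    rw [h1] at bern
    -- bern : 1 + p * -(B/S) ≤ (A/S)^p
    have hSp : (0:ℝ) < S ^ p := Real.rpow_pos_of_pos h0 p
    have h2 : (A/S)^p * S^p = A^p := by
      rw [Real.div_rpow hA h0.le, div_mul_cancel₀]
      exact hSp.ne'
    have h3 : B / S * S ^ p = B * S ^ (p-1) := by
      rw [Real.rpow_sub h0, Real.rpow_one]
      field_simp
    have h4 : (1 + p * -(B/S)) * S ^ p ≤ (A/S)^p * S^p :=
      mul_le_mul_of_nonneg_right bern hSp.le
    rw [h2] at h4
    have h5 : (1 + p * -(B/S)) * S ^ p = S ^ p - p * (B / S * S ^ p) := by ring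
    rw [h5, h3] at h4
    linarith

lemma key_ineq {p : ℝ} (hp : 1 ≤ p) (a b : ℝ≥0∞) :
    (a + b) ^ p ≤ a ^ p + ENNReal.ofReal p * (b * (a + b) ^ (p - 1)) := by
  have hp0 : (0:ℝ) < p := by linarith
  have hp1 : (0:ℝ) ≤ p - 1 := by linarith
  rcases eq_or_ne a ⊤ with rfl | ha
  · have : (⊤ + b : ℝ≥0∞) = ⊤ := by simp
    rw [this, ENNReal.top_rpow_of_pos hp0]
    exact le_self_add
  rcases eq_or_ne b ⊤ with rfl | hb
  · have h1 : (a + ⊤) = (⊤ : ℝ≥0∞) := by simp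
    have h2 : (⊤:ℝ≥0∞) * (a + ⊤) ^ (p-1) = ⊤ := by
      rw [h1]
      rcases eq_or_lt_of_le hp1 with he | hl
      · rw [← he, ENNReal.rpow_zero, mul_one]
      · rw [ENNReal.top_rpow_of_pos hl, ENNReal.top_mul_top]
    rw [h2, ENNReal.mul_top (by simp [ENNReal.ofReal_eq_zero]; linarith)]
    simp
  -- finite case
  have hab : a + b ≠ ⊤ := by simp [ha, hb]
  set A := a.toReal with hA
  set B := b.toReal with hB
  have hA0 : 0 ≤ A := ENNReal.toReal_nonneg
  have hB0 : 0 ≤ B := ENNReal.toReal_nonneg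
  have hae : a = ENNReal.ofReal A := (ENNReal.ofReal_toReal ha).symm
  have hbe : b = ENNReal.ofReal B := (ENNReal.ofReal_toReal hb).symm
  rw [hae, hbe, ← ENNReal.ofReal_add hA0 hB0,
    ENNReal.ofReal_rpow_of_nonneg (by positivity) hp0.le,
    ENNReal.ofReal_rpow_of_nonneg (by positivity) hp1,
    ENNReal.ofReal_rpow_of_nonneg hA0 hp0.le,
    ← ENNReal.ofReal_mul hB0, ← ENNReal.ofReal_mul hp0.le,
    ← ENNReal.ofReal_add (by positivity) (by positivity)]
  exact ENNReal.ofReal_le_ofReal (key_real hp hA0 hB0)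

lemma exists_bot {ι : Type*} (R : ι → ι → Prop) (htrans : ∀ {x y z}, R x y → R y z → R x z)
    (s : Finset ι) : s.Nonempty → (∀ i ∈ s, ∀ j ∈ s, R i j ∨ R j i) →
    ∃ m ∈ s, ∀ j ∈ s, R m j := by
  classical
  induction s using Finset.induction_on with
  | empty => intro hs _; exact absurd hs (by simp)
  | @insert A t hat ih =>
    intro _ htot
    have hRAA : R A A := by
      rcases htot A (Finset.mem_insert_self _ _) A (Finset.mem_insert_self _ _) with h | h <;>
        exact h
    rcases t.eq_empty_or_nonempty with rfl | hne
    · refine ⟨A, Finset.mem_insert_self _ _, ?_⟩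
      intro j hj
      simp only [Finset.mem_insert, Finset.notMem_empty, or_false] at hj
      subst hj
      exact hRAA
    · obtain ⟨m', hm', hmin⟩ := ih hne (fun i hi j hj =>
        htot i (Finset.mem_insert_of_mem hi) j (Finset.mem_insert_of_mem hj))
      rcases htot A (Finset.mem_insert_self _ _) m' (Finset.mem_insert_of_mem hm') with h | h
      · refine ⟨A, Finset.mem_insert_self _ _, ?_⟩
        intro j hj
        rcases Finset.mem_insert.mp hj with rfl | hj
        · exact hRAA
        · exact htrans h (hmin j hj)
      · refine ⟨m', Finset.mem_insert_of_mem hm', ?_⟩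
        intro j hj
        rcases Finset.mem_insert.mp hj with rfl | hj
        · exact h
        · exact hmin j hj

lemma tele_finset {ι : Type*} {R : ι → ι → Prop} [DecidableEq ι] [∀ i j, Decidable (R i j)]
    (htrans : ∀ {x y z}, R x y → R y z → R x z) {p : ℝ} (hp : 1 ≤ p) (c : ι → ℝ≥0∞)
    (s : Finset ι) (htot : ∀ i ∈ s, ∀ j ∈ s, R i j ∨ R j i) :
    (∑ i ∈ s, c i) ^ p ≤
      ENNReal.ofReal p * ∑ i ∈ s, c i * (∑ j ∈ s.filter (fun j => R i j), c j) ^ (p - 1) := by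
  have hp0 : (0:ℝ) < p := by linarith
  have hp1 : (0:ℝ) ≤ p - 1 := by linarith
  induction s using Finset.strongInduction with
  | _ s ih =>
    rcases s.eq_empty_or_nonempty with rfl | hne
    · simp [ENNReal.zero_rpow_of_pos hp0]
    obtain ⟨m, hm, hmin⟩ := exists_bot R htrans s hne htot
    set t := s.erase m with ht
    have hts : t ⊆ s := Finset.erase_subset m s
    have hsum : ∑ i ∈ s, c i = c m + ∑ i ∈ t, c i := (Finset.add_sum_erase s c hm).symm
    have hIH := ih t (Finset.erase_ssubset hm) (fun i hi j hj => htot i (hts hi) j (hts hj))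
    have hkey := key_ineq hp (∑ i ∈ t, c i) (c m)
    rw [add_comm (∑ i ∈ t, c i) (c m)] at hkey
    rw [hsum]
    refine hkey.trans ?_
    have hBm : c m + ∑ i ∈ t, c i ≤ ∑ j ∈ s.filter (fun j => R m j), c j := by
      rw [Finset.filter_true_of_mem (fun j hj => hmin j hj), ← hsum]
    have hmain : ∀ i ∈ t, c i * (∑ j ∈ t.filter (fun j => R i j), c j) ^ (p - 1)
        ≤ c i * (∑ j ∈ s.filter (fun j => R i j), c j) ^ (p - 1) := by
      intro i _
      refine mul_le_mul_right (ENNReal.rpow_le_rpow ?_ hp1) _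
      exact Finset.sum_le_sum_of_subset (Finset.filter_subset_filter _ hts)
    calc (∑ i ∈ t, c i) ^ p + ENNReal.ofReal p * (c m * (c m + ∑ i ∈ t, c i) ^ (p - 1))
        ≤ (ENNReal.ofReal p * ∑ i ∈ t, c i * (∑ j ∈ t.filter (fun j => R i j), c j) ^ (p - 1))
          + ENNReal.ofReal p * (c m * (∑ j ∈ s.filter (fun j => R m j), c j) ^ (p - 1)) := by
          exact add_le_add hIH (mul_le_mul_right (mul_le_mul_right
            (ENNReal.rpow_le_rpow hBm hp1) _) _)
      _ ≤ (ENNReal.ofReal p * ∑ i ∈ t, c i * (∑ j ∈ s.filter (fun j => R i j), c j) ^ (p - 1))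
          + ENNReal.ofReal p * (c m * (∑ j ∈ s.filter (fun j => R m j), c j) ^ (p - 1)) := by
          exact add_le_add_left (mul_le_mul_right (Finset.sum_le_sum hmain) _) _
      _ = ENNReal.ofReal p * ∑ i ∈ s, c i * (∑ j ∈ s.filter (fun j => R i j), c j) ^ (p - 1) := by
          rw [← mul_add]
          congr 1
          rw [add_comm (∑ i ∈ t, c i * (∑ j ∈ s.filter (fun j => R i j), c j) ^ (p - 1))]
          exact Finset.add_sum_erase s (fun i => c i * (∑ j ∈ s.filter (fun j => R i j), c j) ^ (p - 1)) hm

lemma tsum_rpow_le_rpow_tsum {ι : Type*} {p : ℝ} (hp : 1 ≤ p) (c : ι → ℝ≥0∞) :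
    ∑' i, c i ^ p ≤ (∑' i, c i) ^ p := by
  have hp0 : (0:ℝ) < p := by linarith
  have hp1 : (0:ℝ) ≤ p - 1 := by linarith
  by_cases hT : ∑' i, c i = ⊤
  · rw [hT, ENNReal.top_rpow_of_pos hp0]; exact le_top
  by_cases h0 : ∑' i, c i = 0
  · have hz : ∀ i, c i = 0 := by
      intro i
      exact le_antisymm (h0 ▸ ENNReal.le_tsum i) (zero_le)
    simp [hz, ENNReal.zero_rpow_of_pos hp0]
  calc ∑' i, c i ^ p ≤ ∑' i, c i * (∑' i, c i) ^ (p-1) := by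
        refine ENNReal.tsum_le_tsum fun i => ?_
        rcases eq_or_ne (c i) 0 with hci | hci
        · rw [hci, ENNReal.zero_rpow_of_pos hp0]; exact zero_le
        · have hcit : c i ≠ ⊤ := by
            intro hh
            exact hT (top_le_iff.mp (hh ▸ ENNReal.le_tsum i))
          calc c i ^ p = c i ^ (1 + (p-1)) := by norm_num
            _ = c i * c i ^ (p-1) := by rw [ENNReal.rpow_add _ _ hci hcit, ENNReal.rpow_one]
            _ ≤ c i * (∑' i, c i) ^ (p-1) :=
                mul_le_mul_right (ENNReal.rpow_le_rpow (ENNReal.le_tsum i) hp1) _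
    _ = (∑' i, c i) * (∑' i, c i) ^ (p-1) := ENNReal.tsum_mul_right
    _ = (∑' i, c i) ^ p := by
        have e := ENNReal.rpow_add (x := ∑' i, c i) 1 (p-1) h0 hT
        rw [ENNReal.rpow_one] at e
        rw [← e]
        congr 1
        ring

lemma tsum_rpow_of_disjoint {ι : Type*} {p : ℝ} (hp0 : 0 < p) (c : ι → ℝ≥0∞)
    (h : ∀ i j, i ≠ j → c i = 0 ∨ c j = 0) :
    (∑' i, c i) ^ p = ∑' i, c i ^ p := by
  by_cases hex : ∃ i, c i ≠ 0
  · obtain ⟨i₀, hi₀⟩ := hex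
    have h1 : ∑' i, c i = c i₀ := tsum_eq_single i₀ (fun j hj => (h j i₀ hj).resolve_right hi₀)
    have h2 : ∑' i, c i ^ p = c i₀ ^ p := tsum_eq_single i₀ (fun j hj => by
      rw [(h j i₀ hj).resolve_right hi₀, ENNReal.zero_rpow_of_pos hp0])
    rw [h1, h2]
  · push_neg at hex
    simp [hex, ENNReal.zero_rpow_of_pos hp0]

lemma finsum_rpow_of_disjoint {ι : Type*} {p : ℝ} (hp0 : 0 < p) (s : Finset ι) (c : ι → ℝ≥0∞)
    (h : ∀ i j, i ≠ j → c i = 0 ∨ c j = 0) :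
    (∑ i ∈ s, c i) ^ p = ∑ i ∈ s, c i ^ p := by
  classical
  by_cases hex : ∃ i ∈ s, c i ≠ 0
  · obtain ⟨i₀, hi₀s, hi₀⟩ := hex
    have h1 : ∑ i ∈ s, c i = c i₀ :=
      Finset.sum_eq_single i₀ (fun j _ hj => (h j i₀ hj).resolve_right hi₀) (fun hc => absurd hi₀s hc)
    have h2 : ∑ i ∈ s, c i ^ p = c i₀ ^ p :=
      Finset.sum_eq_single i₀ (fun j _ hj => by
        rw [(h j i₀ hj).resolve_right hi₀, ENNReal.zero_rpow_of_pos hp0])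
        (fun hc => absurd hi₀s hc)
    rw [h1, h2]
  · push_neg at hex
    rw [Finset.sum_eq_zero hex, Finset.sum_eq_zero (fun i hi => by
      rw [hex i hi, ENNReal.zero_rpow_of_pos hp0]), ENNReal.zero_rpow_of_pos hp0]

lemma lintegral_Lp_finsum_le {α : Type*} [MeasurableSpace α] {μ : Measure α} {p : ℝ} (hp : 1 ≤ p)
    {ι : Type*} (s : Finset ι) (f : ι → α → ℝ≥0∞) (hf : ∀ i, Measurable (f i)) :
    (∫⁻ x, (∑ i ∈ s, f i x) ^ p ∂μ) ^ (1/p) ≤ ∑ i ∈ s, (∫⁻ x, f i x ^ p ∂μ) ^ (1/p) := by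
  classical
  have hp0 : (0:ℝ) < p := by linarith
  induction s using Finset.induction_on with
  | empty =>
    simp only [Finset.sum_empty, ENNReal.zero_rpow_of_pos hp0, lintegral_zero,
      ENNReal.zero_rpow_of_pos (one_div_pos.mpr hp0), le_refl]
  | @insert A t hat ih =>
    have hmeas : Measurable fun x => ∑ i ∈ t, f i x := by
      apply Finset.measurable_sum
      exact fun i _ => hf i
    have hmink := ENNReal.lintegral_Lp_add_le (μ := μ) (hf A).aemeasurable hmeas.aemeasurable hp
    have heq : (∫⁻ x, (∑ i ∈ insert A t, f i x) ^ p ∂μ)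
        = ∫⁻ x, ((f A + fun y => ∑ i ∈ t, f i y) x) ^ p ∂μ := by
      apply lintegral_congr
      intro x
      simp [Finset.sum_insert hat]
    rw [Finset.sum_insert hat, heq]
    exact hmink.trans (add_le_add_right ih _)

theorem sparse_lp_sum
    {n : ℕ} (σ : Measure (Fin n → ℝ)) [IsLocallyFiniteMeasure σ]
    (p : ℝ) (hp : 1 ≤ p)
    (𝓕 : Set (Set (Fin n → ℝ))) (h𝓕 : ∀ F ∈ 𝓕, IsDyadicCube F)
    (E : Set (Fin n → ℝ) → Set (Fin n → ℝ))
    (hE : ∀ F ∈ 𝓕, E F ⊆ F ∧ MeasurableSet (E F) ∧ σ F / 2 ≤ σ (E F))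
    (hdisj : ∀ F ∈ 𝓕, ∀ G ∈ 𝓕, F ≠ G → Disjoint (E F) (E G))
    (a : Set (Fin n → ℝ) → (Fin n → ℝ) → ℝ≥0∞)
    (ha : ∀ F ∈ 𝓕, Measurable (a F))
    (hsupp : ∀ F ∈ 𝓕, ∀ x, x ∉ F → a F x = 0)
    (hconst : ∀ F ∈ 𝓕, ∀ F', IsChild 𝓕 F F' → ∀ x ∈ F', ∀ y ∈ F', a F x = a F y) :
    (∑' F : 𝓕, ∫⁻ x, a F.1 x ^ p ∂σ) ^ (1 / p)
        ≤ (∫⁻ x, (∑' F : 𝓕, a F.1 x) ^ p ∂σ) ^ (1 / p)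
      ∧ (∫⁻ x, (∑' F : 𝓕, a F.1 x) ^ p ∂σ) ^ (1 / p)
        ≤ ENNReal.ofReal (3 * p) * (∑' F : 𝓕, ∫⁻ x, a F.1 x ^ p ∂σ) ^ (1 / p) := by
  classical
  have hp0 : (0:ℝ) < p := by linarith
  have hp1 : (0:ℝ) ≤ p - 1 := by linarith
  have h1p : (0:ℝ) < 1/p := one_div_pos.mpr hp0
  -- countability of the family
  have hcount : 𝓕.Countable := by
    refine (Set.countable_range (fun kj : ℤ × (Fin n → ℤ) => DyadicCube n kj.1 kj.2)).mono ?_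
    intro F hF
    obtain ⟨k, j, rfl⟩ := h𝓕 F hF
    exact ⟨(k, j), rfl⟩
  haveI : Countable ↥𝓕 := hcount.to_subtype
  -- measurability of cubes
  have hmeasF : ∀ F ∈ 𝓕, MeasurableSet F := by
    intro F hF
    obtain ⟨k, j, rfl⟩ := h𝓕 F hF
    have hrw : DyadicCube n k j = ⋂ i : Fin n, (fun x : Fin n → ℝ => x i) ⁻¹'
        (Set.Ico ((j i : ℝ) / 2 ^ k) (((j i : ℝ) + 1) / 2 ^ k)) := by
      ext x
      simp [DyadicCube, Set.mem_iInter, Set.mem_Ico]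
    rw [hrw]
    exact MeasurableSet.iInter fun i => (measurable_pi_apply i) measurableSet_Ico
  have haF : ∀ F : ↥𝓕, Measurable (a F.1) := fun F => ha F.1 F.2
  have haFp : ∀ F : ↥𝓕, Measurable (fun x => a F.1 x ^ p) :=
    fun F => (ENNReal.continuous_rpow_const.measurable).comp (haF F)
  -- lower bound
  have hlow : (∑' F : 𝓕, ∫⁻ x, a F.1 x ^ p ∂σ) ^ (1 / p)
      ≤ (∫⁻ x, (∑' F : 𝓕, a F.1 x) ^ p ∂σ) ^ (1 / p) := by
    refine ENNReal.rpow_le_rpow ?_ h1p.le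
    calc ∑' F : 𝓕, ∫⁻ x, a F.1 x ^ p ∂σ
        = ∫⁻ x, ∑' F : 𝓕, a F.1 x ^ p ∂σ := (lintegral_tsum fun F => (haFp F).aemeasurable).symm
      _ ≤ ∫⁻ x, (∑' F : 𝓕, a F.1 x) ^ p ∂σ :=
          lintegral_mono fun x => tsum_rpow_le_rpow_tsum hp _
  refine ⟨hlow, ?_⟩
  -- the case p = 1
  rcases eq_or_lt_of_le hp with hpe | hpgt
  · subst hpe
    simp only [ENNReal.rpow_one, one_div_one]
    rw [lintegral_tsum (fun F : ↥𝓕 => (haF F).aemeasurable)]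
    have h3 : (1:ℝ≥0∞) ≤ ENNReal.ofReal (3 * 1) := by
      rw [ENNReal.one_le_ofReal]; norm_num
    exact le_trans (le_of_eq (one_mul _).symm) (mul_le_mul_left h3 _)
  -- now p > 1
  set A := ∑' F : 𝓕, ∫⁻ x, a F.1 x ^ p ∂σ with hA
  by_cases hAtop : A = ⊤
  · rw [hAtop, ENNReal.top_rpow_of_pos h1p, ENNReal.mul_top (by
      simp only [ne_eq, ENNReal.ofReal_eq_zero, not_le]
      linarith)]
    exact le_top
  -- definitions
  set U : Set (Fin n → ℝ) → Set (Fin n → ℝ) :=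
    fun F => ⋃ G ∈ {G | G ∈ 𝓕 ∧ G ⊂ F}, G with hU
  have hUmem : ∀ F x, x ∈ U F ↔ ∃ G, G ∈ 𝓕 ∧ G ⊂ F ∧ x ∈ G := by
    intro F x
    simp only [hU, Set.mem_iUnion, Set.mem_setOf_eq, exists_prop]
    tauto
  have hUsub : ∀ F, U F ⊆ F := by
    intro F x hx
    obtain ⟨G, _, hGF, hxG⟩ := (hUmem F x).mp hx
    exact hGF.subset hxG
  have hUmeas : ∀ F, MeasurableSet (U F) := by
    intro F
    exact MeasurableSet.biUnion (Set.Countable.mono (fun G hG => hG.1) hcount)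
      (fun G hG => hmeasF G hG.1)
  have hchild : ∀ F ∈ 𝓕, ∀ x ∈ U F, ∃ M, IsChild 𝓕 F M ∧ x ∈ M := by
    intro F hF x hx
    obtain ⟨G, hG𝓕, hGF, hxG⟩ := (hUmem F x).mp hx
    obtain ⟨M, hM, hGM⟩ := exists_child h𝓕 hF hG𝓕 hGF
    exact ⟨M, hM, hGM hxG⟩
  have hchild_sub : ∀ F (M : Set (Fin n → ℝ)), IsChild 𝓕 F M → M ⊆ U F := by
    intro F M hM x hx
    exact (hUmem F x).mpr ⟨M, hM.1, hM.2.1, hx⟩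
  set hf : ↥𝓕 → (Fin n → ℝ) → ℝ≥0∞ := fun F => (U F.1).indicator (a F.1) with hhf
  set gf : ↥𝓕 → (Fin n → ℝ) → ℝ≥0∞ := fun F => (U F.1)ᶜ.indicator (a F.1) with hgf
  have hdecomp : ∀ F : ↥𝓕, ∀ x, a F.1 x = hf F x + gf F x := by
    intro F x
    show a F.1 x = (U F.1).indicator (a F.1) x + (U F.1)ᶜ.indicator (a F.1) x
    exact (congrFun (Set.indicator_self_add_compl (U F.1) (a F.1)) x).symm
  have hmeas_hf : ∀ F : ↥𝓕, Measurable (hf F) := fun F => (haF F).indicator (hUmeas F.1)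
  have hmeas_gf : ∀ F : ↥𝓕, Measurable (gf F) := fun F => (haF F).indicator (hUmeas F.1).compl
  set g : (Fin n → ℝ) → ℝ≥0∞ := fun x => ∑' F : 𝓕, gf F x with hgdef
  set hh : (Fin n → ℝ) → ℝ≥0∞ := fun x => ∑' F : 𝓕, hf F x with hhdef
  have hgmeas : Measurable g := Measurable.ennreal_tsum hmeas_gf
  have hhmeas : Measurable hh := Measurable.ennreal_tsum hmeas_hf
  have hsplit : ∀ x, (∑' F : 𝓕, a F.1 x) = hh x + g x := by
    intro x
    rw [hhdef, hgdef, ← ENNReal.tsum_add]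
    exact tsum_congr fun F => hdecomp F x
  have hmink : (∫⁻ x, (∑' F : 𝓕, a F.1 x) ^ p ∂σ) ^ (1/p)
      ≤ (∫⁻ x, hh x ^ p ∂σ) ^ (1/p) + (∫⁻ x, g x ^ p ∂σ) ^ (1/p) := by
    have heq : (∫⁻ x, (∑' F : 𝓕, a F.1 x) ^ p ∂σ) = ∫⁻ x, ((hh + g) x) ^ p ∂σ := by
      apply lintegral_congr
      intro x
      rw [hsplit x]
      rfl
    rw [heq]
    exact ENNReal.lintegral_Lp_add_le hhmeas.aemeasurable hgmeas.aemeasurable hp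
  -- the g part
  have hsupp_h : ∀ F : ↥𝓕, ∀ x, hf F x ≠ 0 → x ∈ U F.1 := by
    intro F x hx
    by_contra hc
    exact hx (Set.indicator_of_notMem hc _)
  have hsupp_g : ∀ F : ↥𝓕, ∀ x, gf F x ≠ 0 → x ∈ F.1 ∧ x ∉ U F.1 := by
    intro F x hx
    have h1 : x ∈ (U F.1)ᶜ := by
      by_contra hc
      exact hx (Set.indicator_of_notMem hc _)
    have h2 : a F.1 x ≠ 0 := by
      intro h0
      apply hx
      show (U F.1)ᶜ.indicator (a F.1) x = 0
      rw [Set.indicator_of_mem h1, h0]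
    refine ⟨?_, h1⟩
    by_contra hc
    exact h2 (hsupp F.1 F.2 x hc)
  have hgdisj : ∀ x, ∀ F G : ↥𝓕, F ≠ G → gf F x = 0 ∨ gf G x = 0 := by
    intro x F G hFG
    by_contra hc
    push_neg at hc
    obtain ⟨hF1, hG1⟩ := hc
    obtain ⟨hxF, hxUF⟩ := hsupp_g F x hF1
    obtain ⟨hxG, hxUG⟩ := hsupp_g G x hG1
    have hne : F.1 ≠ G.1 := fun he => hFG (Subtype.ext he)
    have hint : (F.1 ∩ G.1).Nonempty := ⟨x, hxF, hxG⟩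
    rcases (h𝓕 F.1 F.2).subset_or_subset (h𝓕 G.1 G.2) hint with hsub | hsub
    · exact hxUG ((hUmem G.1 x).mpr ⟨F.1, F.2, ssubset_of_subset_of_ne hsub hne, hxF⟩)
    · exact hxUF ((hUmem F.1 x).mpr ⟨G.1, G.2, ssubset_of_subset_of_ne hsub hne.symm, hxG⟩)
  have hgle : (∫⁻ x, g x ^ p ∂σ) ≤ A := by
    have h1 : ∀ x, g x ^ p = ∑' F : 𝓕, gf F x ^ p :=
      fun x => tsum_rpow_of_disjoint hp0 _ (fun F G hFG => hgdisj x F G hFG)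
    calc (∫⁻ x, g x ^ p ∂σ) = ∫⁻ x, ∑' F : 𝓕, gf F x ^ p ∂σ := lintegral_congr h1
      _ = ∑' F : 𝓕, ∫⁻ x, gf F x ^ p ∂σ := lintegral_tsum fun F =>
          ((ENNReal.continuous_rpow_const.measurable).comp (hmeas_gf F)).aemeasurable
      _ ≤ A := by
          rw [hA]
          refine ENNReal.tsum_le_tsum fun F => lintegral_mono fun x => ?_
          exact ENNReal.rpow_le_rpow (Set.indicator_le_self _ _ x) hp0.le
  -- the h part
  set Y : ↥𝓕 → Set (Fin n → ℝ) := fun G => ⋃ M ∈ {M | IsChild 𝓕 G.1 M}, E M with hY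
  have hYmeas : ∀ G : ↥𝓕, MeasurableSet (Y G) :=
    fun G => MeasurableSet.biUnion (Set.Countable.mono (fun M hM => hM.1) hcount)
      (fun M hM => (hE M hM.1).2.1)
  have hYdisj : ∀ x, ∀ F G : ↥𝓕, F ≠ G → x ∈ Y F → x ∈ Y G → False := by
    intro x F G hFG hxF hxG
    simp only [hY, Set.mem_iUnion, Set.mem_setOf_eq, exists_prop] at hxF hxG
    obtain ⟨M1, hM1, hxM1⟩ := hxF
    obtain ⟨M2, hM2, hxM2⟩ := hxG
    rcases eq_or_ne M1 M2 with rfl | hMne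
    · exact hFG (Subtype.ext (parent_unique h𝓕 F.2 G.2 hM1 hM2))
    · exact Set.disjoint_left.mp (hdisj M1 hM1.1 M2 hM2.1 hMne) hxM1 hxM2
  -- conjugate exponent
  have hq := Real.HolderConjugate.conjExponent hpgt
  set q := p.conjExponent with hqdef
  have hq0 : (0:ℝ) ≤ 1/q := le_of_lt (one_div_pos.mpr hq.symm.pos)
  -- core estimate for finite subfamilies
  have hcore : ∀ s : Finset ↥𝓕,
      (∫⁻ x, (∑ G ∈ s, hf G x) ^ p ∂σ) ≤ (ENNReal.ofReal (2*p) * A ^ (1/p)) ^ p := by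
    intro s
    set Bs : ↥𝓕 → (Fin n → ℝ) → ℝ≥0∞ :=
      fun G x => ∑ G' ∈ s.filter (fun G' => G.1 ⊆ G'.1), hf G' x with hBs
    have hBsmeas : ∀ G, Measurable (Bs G) :=
      fun G => Finset.measurable_sum _ (fun G' _ => hmeas_hf G')
    have hhsfmeas : Measurable (fun x => ∑ G ∈ s, hf G x) :=
      Finset.measurable_sum _ (fun G _ => hmeas_hf G)
    -- pointwise telescoping
    have hptwise : ∀ x, (∑ G ∈ s, hf G x) ^ p
        ≤ ENNReal.ofReal p * ∑ G ∈ s, hf G x * Bs G x ^ (p-1) := by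
      intro x
      set s' := s.filter (fun G => hf G x ≠ 0) with hs'
      have hsub' : s' ⊆ s := Finset.filter_subset _ _
      have hxmem : ∀ G ∈ s', x ∈ G.1 := by
        intro G hG
        exact hUsub G.1 (hsupp_h G x (Finset.mem_filter.mp hG).2)
      have htot : ∀ F ∈ s', ∀ G ∈ s', F.1 ⊆ G.1 ∨ G.1 ⊆ F.1 := by
        intro F hF G hG
        exact (h𝓕 F.1 F.2).subset_or_subset (h𝓕 G.1 G.2) ⟨x, hxmem F hF, hxmem G hG⟩
      have htele := tele_finset (R := fun (F G : ↥𝓕) => F.1 ⊆ G.1)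
        (fun h1 h2 => Set.Subset.trans h1 h2) hp (fun G => hf G x) s' htot
      have hsum_eq : ∑ G ∈ s', hf G x = ∑ G ∈ s, hf G x := Finset.sum_filter_ne_zero s
      calc (∑ G ∈ s, hf G x) ^ p = (∑ G ∈ s', hf G x) ^ p := by rw [hsum_eq]
        _ ≤ ENNReal.ofReal p * ∑ G ∈ s', hf G x *
              (∑ G' ∈ s'.filter (fun G' => G.1 ⊆ G'.1), hf G' x) ^ (p-1) := htele
        _ ≤ ENNReal.ofReal p * ∑ G ∈ s, hf G x * Bs G x ^ (p-1) := by
            refine mul_le_mul_right ?_ _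
            refine le_trans (Finset.sum_le_sum ?_) (Finset.sum_le_sum_of_subset hsub')
            intro G hG
            refine mul_le_mul_right (ENNReal.rpow_le_rpow ?_ hp1) _
            exact Finset.sum_le_sum_of_subset (Finset.filter_subset_filter _ hsub')
    have hmGB : ∀ G : ↥𝓕, Measurable (fun x => hf G x * Bs G x ^ (p-1)) :=
      fun G => (hmeas_hf G).mul ((ENNReal.continuous_rpow_const.measurable).comp (hBsmeas G))
    have hstep2 : (∫⁻ x, (∑ G ∈ s, hf G x) ^ p ∂σ) ≤
        ENNReal.ofReal p * ∑ G ∈ s, ∫⁻ x, hf G x * Bs G x ^ (p-1) ∂σ := by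
      calc (∫⁻ x, (∑ G ∈ s, hf G x) ^ p ∂σ)
          ≤ ∫⁻ x, ENNReal.ofReal p * ∑ G ∈ s, hf G x * Bs G x ^ (p-1) ∂σ := lintegral_mono hptwise
        _ = ENNReal.ofReal p * ∫⁻ x, ∑ G ∈ s, hf G x * Bs G x ^ (p-1) ∂σ :=
            lintegral_const_mul _ (Finset.measurable_sum _ (fun G _ => hmGB G))
        _ = ENNReal.ofReal p * ∑ G ∈ s, ∫⁻ x, hf G x * Bs G x ^ (p-1) ∂σ := by
            rw [lintegral_finset_sum _ (fun G _ => hmGB G)]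
    have hstep3 : ∀ G ∈ s, (∫⁻ x, hf G x * Bs G x ^ (p-1) ∂σ)
        ≤ 2 * ∫⁻ x, (Y G).indicator (fun y => hf G y * Bs G y ^ (p-1)) x ∂σ := by
      intro G hGs
      set φ : (Fin n → ℝ) → ℝ≥0∞ := fun x => hf G x * Bs G x ^ (p-1) with hφ
      have hφmeas : Measurable φ := hmGB G
      have hφconst : ∀ M, IsChild 𝓕 G.1 M → ∀ x ∈ M, ∀ y ∈ M, φ x = φ y := by
        intro M hM x hxM y hyM
        have hMU : M ⊆ U G.1 := hchild_sub G.1 M hM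
        have hhfc : hf G x = hf G y := by
          rw [hhf]
          simp only
          rw [Set.indicator_of_mem (hMU hxM), Set.indicator_of_mem (hMU hyM)]
          exact hconst G.1 G.2 M hM x hxM y hyM
        have hBc : Bs G x = Bs G y := by
          rw [hBs]
          refine Finset.sum_congr rfl ?_
          intro G' hG'
          have hGG' : G.1 ⊆ G'.1 := (Finset.mem_filter.mp hG').2
          rcases eq_or_ssubset_of_subset hGG' with heq | hss
          · have hMU' : M ⊆ U G'.1 := by rw [← heq]; exact hMU
            have hMc : IsChild 𝓕 G'.1 M := by rw [← heq]; exact hM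
            rw [hhf]
            simp only
            rw [Set.indicator_of_mem (hMU' hxM), Set.indicator_of_mem (hMU' hyM)]
            exact hconst G'.1 G'.2 M hMc x hxM y hyM
          · have hGU : G.1 ⊆ U G'.1 := fun z hz => (hUmem G'.1 z).mpr ⟨G.1, G.2, hss, hz⟩
            obtain ⟨M', hM', hGM'⟩ := exists_child h𝓕 G'.2 G.2 hss
            have hxM' : x ∈ M' := hGM' (hM.2.1.subset hxM)
            have hyM' : y ∈ M' := hGM' (hM.2.1.subset hyM)
            rw [hhf]
            simp only
            rw [Set.indicator_of_mem (hGU (hM.2.1.subset hxM)),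
              Set.indicator_of_mem (hGU (hM.2.1.subset hyM))]
            exact hconst G'.1 G'.2 M' hM' x hxM' y hyM'
        rw [hφ]
        simp only
        rw [hhfc, hBc]
      have hφ0 : ∀ x, x ∉ U G.1 → φ x = 0 := by
        intro x hx
        rw [hφ]
        simp only
        rw [hhf]
        simp only
        rw [Set.indicator_of_notMem hx, zero_mul]
      have hccount : {M | IsChild 𝓕 G.1 M}.Countable :=
        Set.Countable.mono (fun M hM => hM.1) hcount
      haveI := hccount.to_subtype
      have hdecphi : ∀ x, φ x = ∑' M : {M | IsChild 𝓕 G.1 M}, (M.1).indicator φ x := by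
        intro x
        by_cases hx : x ∈ U G.1
        · obtain ⟨M₀, hM₀, hxM₀⟩ := hchild G.1 G.2 x hx
          rw [tsum_eq_single (⟨M₀, hM₀⟩ : {M | IsChild 𝓕 G.1 M}) ?_]
          · rw [Set.indicator_of_mem hxM₀]
          · intro M hMne
            have hxM : x ∉ M.1 := by
              intro hxM
              refine hMne (Subtype.ext ?_)
              by_contra hne
              exact Set.disjoint_left.mp (children_disjoint h𝓕 M.2 hM₀ hne) hxM hxM₀
            exact Set.indicator_of_notMem hxM _
        · rw [hφ0 x hx]
          symm
          rw [ENNReal.tsum_eq_zero]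
          intro M
          have hxM : x ∉ M.1 := fun hxM => hx (hchild_sub G.1 M.1 M.2 hxM)
          exact Set.indicator_of_notMem hxM _
      have hint : (∫⁻ x, φ x ∂σ) = ∑' M : {M | IsChild 𝓕 G.1 M}, ∫⁻ x in M.1, φ x ∂σ := by
        rw [lintegral_congr hdecphi,
          lintegral_tsum (fun (M : ↥{M | IsChild 𝓕 G.1 M}) =>
            (hφmeas.indicator (hmeasF M.1 M.2.1)).aemeasurable)]
        exact tsum_congr fun (M : ↥{M | IsChild 𝓕 G.1 M}) =>
          lintegral_indicator (hmeasF M.1 M.2.1) φ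
      have hchildbound : ∀ M : {M | IsChild 𝓕 G.1 M},
          (∫⁻ x in M.1, φ x ∂σ) ≤ 2 * ∫⁻ x in E M.1, φ x ∂σ := by
        intro M
        obtain ⟨xM, hxM⟩ : (M.1).Nonempty := (h𝓕 M.1 M.2.1).nonempty
        have hEM := hE M.1 M.2.1
        have hconstM := hφconst M.1 M.2
        have h1 : (∫⁻ x in M.1, φ x ∂σ) = φ xM * σ M.1 := by
          rw [setLIntegral_congr_fun (hmeasF M.1 M.2.1)
            (fun x hx => hconstM x hx xM hxM)]
          exact setLIntegral_const _ _
        have h2 : (∫⁻ x in E M.1, φ x ∂σ) = φ xM * σ (E M.1) := by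
          rw [setLIntegral_congr_fun hEM.2.1
            (fun x hx => hconstM x (hEM.1 hx) xM hxM)]
          exact setLIntegral_const _ _
        rw [h1, h2]
        have hσ : σ M.1 ≤ 2 * σ (E M.1) := by
          have h3 := hEM.2.2
          rw [ENNReal.div_le_iff_le_mul (Or.inl two_ne_zero) (Or.inl ENNReal.ofNat_ne_top)] at h3
          rwa [mul_comm] at h3
        calc φ xM * σ M.1 ≤ φ xM * (2 * σ (E M.1)) := mul_le_mul_right hσ _
          _ = 2 * (φ xM * σ (E M.1)) := by ring
      have hEY : ∀ M : {M | IsChild 𝓕 G.1 M}, E M.1 ⊆ Y G := by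
        intro M x hx
        simp only [hY, Set.mem_iUnion, Set.mem_setOf_eq, exists_prop]
        exact ⟨M.1, M.2, hx⟩
      have hconv : ∑' M : {M | IsChild 𝓕 G.1 M}, ∫⁻ x in E M.1, φ x ∂σ
          ≤ ∫⁻ x, (Y G).indicator φ x ∂σ := by
        calc ∑' M : {M | IsChild 𝓕 G.1 M}, ∫⁻ x in E M.1, φ x ∂σ
            = ∑' M : {M | IsChild 𝓕 G.1 M}, ∫⁻ x, (E M.1).indicator φ x ∂σ :=
              tsum_congr fun M => (lintegral_indicator (hE M.1 M.2.1).2.1 φ).symm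
          _ = ∫⁻ x, ∑' M : {M | IsChild 𝓕 G.1 M}, (E M.1).indicator φ x ∂σ :=
              (lintegral_tsum (fun (M : ↥{M | IsChild 𝓕 G.1 M}) =>
                (hφmeas.indicator (hE M.1 M.2.1).2.1).aemeasurable)).symm
          _ ≤ ∫⁻ x, (Y G).indicator φ x ∂σ := by
              refine lintegral_mono fun x => ?_
              by_cases hex : ∃ M : {M | IsChild 𝓕 G.1 M}, x ∈ E M.1
              · obtain ⟨M₀, hM₀⟩ := hex
                rw [tsum_eq_single M₀ ?_]
                · rw [Set.indicator_of_mem hM₀, Set.indicator_of_mem (hEY M₀ hM₀)]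
                · intro M hMne
                  have hxe : x ∉ E M.1 := by
                    intro hxE
                    have hne : M.1 ≠ M₀.1 := fun he => hMne (Subtype.ext he)
                    exact Set.disjoint_left.mp (hdisj M.1 M.2.1 M₀.1 M₀.2.1 hne) hxE hM₀
                  exact Set.indicator_of_notMem hxe _
              · push_neg at hex
                have h0 : ∑' M : {M | IsChild 𝓕 G.1 M}, (E M.1).indicator φ x = 0 := by
                  rw [ENNReal.tsum_eq_zero]
                  exact fun M => Set.indicator_of_notMem (hex M) _
                rw [h0]
                exact zero_le
      calc (∫⁻ x, φ x ∂σ) = ∑' M : {M | IsChild 𝓕 G.1 M}, ∫⁻ x in M.1, φ x ∂σ := hint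
        _ ≤ ∑' M : {M | IsChild 𝓕 G.1 M}, 2 * ∫⁻ x in E M.1, φ x ∂σ :=
            ENNReal.tsum_le_tsum hchildbound
        _ = 2 * ∑' M : {M | IsChild 𝓕 G.1 M}, ∫⁻ x in E M.1, φ x ∂σ := ENNReal.tsum_mul_left
        _ ≤ 2 * ∫⁻ x, (Y G).indicator φ x ∂σ := mul_le_mul_right hconv _
    -- step 4 : pointwise domination on Y G
    set w : (Fin n → ℝ) → ℝ≥0∞ := fun x => ∑ G ∈ s, (Y G).indicator (a G.1) x with hw
    have hwmeas : Measurable w := Finset.measurable_sum _ (fun G _ => (haF G).indicator (hYmeas G))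
    have hstep4 : ∀ G ∈ s, ∀ x, (Y G).indicator (fun y => hf G y * Bs G y ^ (p-1)) x
        ≤ (Y G).indicator (a G.1) x * (∑ G' ∈ s, hf G' x) ^ (p-1) := by
      intro G hGs x
      by_cases hx : x ∈ Y G
      · rw [Set.indicator_of_mem hx, Set.indicator_of_mem hx]
        refine mul_le_mul' (Set.indicator_le_self _ _ x) (ENNReal.rpow_le_rpow ?_ hp1)
        exact Finset.sum_le_sum_of_subset (Finset.filter_subset _ _)
      · rw [Set.indicator_of_notMem hx, Set.indicator_of_notMem hx, zero_mul]
    have hwp : (∫⁻ x, w x ^ p ∂σ) ≤ A := by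
      have hdisjw : ∀ x, ∀ F G : ↥𝓕, F ≠ G →
          (Y F).indicator (a F.1) x = 0 ∨ (Y G).indicator (a G.1) x = 0 := by
        intro x F G hFG
        by_cases hxF : x ∈ Y F
        · right
          have hxG : x ∉ Y G := fun hxG => hYdisj x F G hFG hxF hxG
          exact Set.indicator_of_notMem hxG _
        · left
          exact Set.indicator_of_notMem hxF _
      have h1 : ∀ x, w x ^ p = ∑ G ∈ s, ((Y G).indicator (a G.1) x) ^ p :=
        fun x => finsum_rpow_of_disjoint hp0 s _ (fun F G hFG => hdisjw x F G hFG)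
      have hmYp : ∀ G : ↥𝓕, Measurable (fun x => ((Y G).indicator (a G.1) x) ^ p) :=
        fun G => (ENNReal.continuous_rpow_const.measurable).comp ((haF G).indicator (hYmeas G))
      calc (∫⁻ x, w x ^ p ∂σ) = ∑ G ∈ s, ∫⁻ x, ((Y G).indicator (a G.1) x) ^ p ∂σ := by
            rw [lintegral_congr h1, lintegral_finset_sum _ (fun G _ => hmYp G)]
        _ ≤ ∑ G ∈ s, ∫⁻ x, a G.1 x ^ p ∂σ := Finset.sum_le_sum (fun G _ =>
            lintegral_mono fun x => ENNReal.rpow_le_rpow (Set.indicator_le_self _ _ x) hp0.le)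
        _ ≤ A := by rw [hA]; exact ENNReal.sum_le_tsum s
    have hpq1 : (p - 1) * q = p := hq.sub_one_mul_conj
    have hhold : (∫⁻ x, w x * (∑ G ∈ s, hf G x) ^ (p-1) ∂σ)
        ≤ (∫⁻ x, w x ^ p ∂σ) ^ (1/p) * (∫⁻ x, (∑ G ∈ s, hf G x) ^ p ∂σ) ^ (1/q) := by
      have hmsf1 : Measurable (fun x => (∑ G ∈ s, hf G x) ^ (p-1)) :=
        (ENNReal.continuous_rpow_const.measurable).comp hhsfmeas
      have hH := ENNReal.lintegral_mul_le_Lp_mul_Lq σ hq hwmeas.aemeasurable hmsf1.aemeasurable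
      have heqR : (∫⁻ x, ((∑ G ∈ s, hf G x) ^ (p-1)) ^ q ∂σ)
          = ∫⁻ x, (∑ G ∈ s, hf G x) ^ p ∂σ := by
        apply lintegral_congr
        intro x
        rw [← ENNReal.rpow_mul, hpq1]
      rw [heqR] at hH
      exact hH
    set I := ∫⁻ x, (∑ G ∈ s, hf G x) ^ p ∂σ with hI
    have hAfin : A ^ (1/p) ≠ ⊤ := (ENNReal.rpow_lt_top_of_nonneg h1p.le hAtop).ne
    have hIne : I ≠ ⊤ := by
      have h1 : I ^ (1/p) ≤ ∑ G ∈ s, (∫⁻ x, hf G x ^ p ∂σ) ^ (1/p) :=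
        lintegral_Lp_finsum_le hp s _ (fun G => hmeas_hf G)
      have h2 : ∀ G : ↥𝓕, (∫⁻ x, hf G x ^ p ∂σ) ≤ A := by
        intro G
        refine le_trans ?_ (hA ▸ ENNReal.le_tsum G)
        exact lintegral_mono fun x => ENNReal.rpow_le_rpow (Set.indicator_le_self _ _ x) hp0.le
      have h3 : (∑ G ∈ s, (∫⁻ x, hf G x ^ p ∂σ) ^ (1/p)) ≠ ⊤ := by
        refine (ENNReal.sum_lt_top.mpr (fun G _ => ?_)).ne
        exact lt_of_le_of_lt (ENNReal.rpow_le_rpow (h2 G) h1p.le) (lt_top_iff_ne_top.mpr hAfin)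
      have h4 : I ^ (1/p) ≠ ⊤ := ne_top_of_le_ne_top h3 h1
      intro hItop
      apply h4
      rw [hItop, ENNReal.top_rpow_of_pos h1p]
    have hchain : I ≤ ENNReal.ofReal (2*p) * A ^ (1/p) * I ^ (1/q) := by
      calc I ≤ ENNReal.ofReal p * ∑ G ∈ s, ∫⁻ x, hf G x * Bs G x ^ (p-1) ∂σ := hstep2
        _ ≤ ENNReal.ofReal p * ∑ G ∈ s,
              2 * ∫⁻ x, (Y G).indicator (fun y => hf G y * Bs G y ^ (p-1)) x ∂σ :=
            mul_le_mul_right (Finset.sum_le_sum hstep3) _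
        _ = ENNReal.ofReal p * (2 * ∑ G ∈ s,
              ∫⁻ x, (Y G).indicator (fun y => hf G y * Bs G y ^ (p-1)) x ∂σ) := by
            congr 1
            rw [Finset.mul_sum]
        _ ≤ ENNReal.ofReal p * (2 * ∑ G ∈ s,
              ∫⁻ x, (Y G).indicator (a G.1) x * (∑ G' ∈ s, hf G' x) ^ (p-1) ∂σ) :=
            mul_le_mul_right (mul_le_mul_right
              (Finset.sum_le_sum (fun G hGs => lintegral_mono (hstep4 G hGs))) _) _
        _ = ENNReal.ofReal p * (2 * ∫⁻ x, w x * (∑ G' ∈ s, hf G' x) ^ (p-1) ∂σ) := by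
            have hmsf1 : Measurable (fun x => (∑ G' ∈ s, hf G' x) ^ (p-1)) :=
              (ENNReal.continuous_rpow_const.measurable).comp
                (Finset.measurable_sum _ (fun G _ => hmeas_hf G))
            have hmprod : ∀ G : ↥𝓕,
                Measurable (fun x => (Y G).indicator (a G.1) x * (∑ G' ∈ s, hf G' x) ^ (p-1)) :=
              fun G => ((haF G).indicator (hYmeas G)).mul hmsf1
            congr 2
            rw [← lintegral_finset_sum s (fun G _ => hmprod G)]
            apply lintegral_congr
            intro x
            show ∑ G ∈ s, (Y G).indicator (a G.1) x * (∑ G' ∈ s, hf G' x) ^ (p-1)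
              = w x * (∑ G' ∈ s, hf G' x) ^ (p-1)
            rw [← Finset.sum_mul]
        _ ≤ ENNReal.ofReal p * (2 * ((∫⁻ x, w x ^ p ∂σ) ^ (1/p) * I ^ (1/q))) :=
            mul_le_mul_right (mul_le_mul_right hhold _) _
        _ ≤ ENNReal.ofReal p * (2 * (A ^ (1/p) * I ^ (1/q))) :=
            mul_le_mul_right (mul_le_mul_right
              (mul_le_mul_left (ENNReal.rpow_le_rpow hwp h1p.le) _) _) _
        _ = ENNReal.ofReal (2*p) * A ^ (1/p) * I ^ (1/q) := by
            rw [ENNReal.ofReal_mul (by norm_num : (0:ℝ) ≤ 2), ENNReal.ofReal_ofNat]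
            ring
    by_cases hI0 : I = 0
    · rw [hI0]
      exact zero_le
    · have hIq0 : I ^ (1/q) ≠ 0 := by
        simp only [ne_eq, ENNReal.rpow_eq_zero_iff, not_or, not_and]
        constructor
        · intro h; exact absurd h hI0
        · intro h; exact absurd h hIne
      have hIqt : I ^ (1/q) ≠ ⊤ := (ENNReal.rpow_lt_top_of_nonneg hq0 hIne).ne
      have hdecompI : I = I ^ (1/p) * I ^ (1/q) := by
        rw [← ENNReal.rpow_add _ _ hI0 hIne, one_div, one_div, hq.inv_add_inv_eq_one,
          ENNReal.rpow_one]
      have hfinal : I ^ (1/p) ≤ ENNReal.ofReal (2*p) * A ^ (1/p) := by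
        have hchain2 : I ^ (1/p) * I ^ (1/q) ≤ ENNReal.ofReal (2*p) * A ^ (1/p) * I ^ (1/q) :=
          le_trans (le_of_eq hdecompI.symm) hchain
        exact (ENNReal.mul_le_mul_iff_left hIq0 hIqt).mp hchain2
      calc I = (I ^ (1/p)) ^ p := by
            rw [← ENNReal.rpow_mul, one_div, inv_mul_cancel₀ hp0.ne', ENNReal.rpow_one]
        _ ≤ (ENNReal.ofReal (2*p) * A ^ (1/p)) ^ p := ENNReal.rpow_le_rpow hfinal hp0.le
  -- take the supremum over finite subfamilies
  have hhint : (∫⁻ x, hh x ^ p ∂σ) ≤ (ENNReal.ofReal (2*p) * A ^ (1/p)) ^ p := by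
    have hmono : ∀ x, hh x ^ p = ⨆ s : Finset ↥𝓕, (∑ G ∈ s, hf G x) ^ p := by
      intro x
      rw [hhdef]
      simp only
      rw [ENNReal.tsum_eq_iSup_sum]
      refine Monotone.map_iSup_of_continuousAt (f := fun y : ℝ≥0∞ => y ^ p) ?_ ?_ ?_
      · exact ENNReal.continuous_rpow_const.continuousAt
      · exact fun u v huv => ENNReal.rpow_le_rpow huv hp0.le
      · exact ENNReal.zero_rpow_of_pos hp0
    have hdirected : Directed (· ≤ ·) (fun s : Finset ↥𝓕 => fun x => (∑ G ∈ s, hf G x) ^ p) := by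
      intro s t
      refine ⟨s ∪ t, fun x => ?_, fun x => ?_⟩
      · exact ENNReal.rpow_le_rpow
          (Finset.sum_le_sum_of_subset Finset.subset_union_left) hp0.le
      · exact ENNReal.rpow_le_rpow
          (Finset.sum_le_sum_of_subset Finset.subset_union_right) hp0.le
    calc (∫⁻ x, hh x ^ p ∂σ) = ∫⁻ x, ⨆ s : Finset ↥𝓕, (∑ G ∈ s, hf G x) ^ p ∂σ :=
          lintegral_congr hmono
      _ = ⨆ s : Finset ↥𝓕, ∫⁻ x, (∑ G ∈ s, hf G x) ^ p ∂σ :=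
          lintegral_iSup_directed (fun s => ((ENNReal.continuous_rpow_const.measurable).comp
            (Finset.measurable_sum _ (fun G _ => hmeas_hf G))).aemeasurable) hdirected
      _ ≤ (ENNReal.ofReal (2*p) * A ^ (1/p)) ^ p := iSup_le hcore
  have hH : (∫⁻ x, hh x ^ p ∂σ) ^ (1/p) ≤ ENNReal.ofReal (2*p) * A ^ (1/p) := by
    refine le_trans (ENNReal.rpow_le_rpow hhint h1p.le) ?_
    rw [← ENNReal.rpow_mul, mul_one_div, div_self hp0.ne', ENNReal.rpow_one]
  have hGbd : (∫⁻ x, g x ^ p ∂σ) ^ (1/p) ≤ A ^ (1/p) := ENNReal.rpow_le_rpow hgle h1p.le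
  calc (∫⁻ x, (∑' F : 𝓕, a F.1 x) ^ p ∂σ) ^ (1/p)
      ≤ (∫⁻ x, hh x ^ p ∂σ) ^ (1/p) + (∫⁻ x, g x ^ p ∂σ) ^ (1/p) := hmink
    _ ≤ ENNReal.ofReal (2*p) * A ^ (1/p) + A ^ (1/p) := add_le_add hH hGbd
    _ = (ENNReal.ofReal (2*p) + 1) * A ^ (1/p) := by ring
    _ ≤ ENNReal.ofReal (3*p) * A ^ (1/p) := by
        refine mul_le_mul_left ?_ _
        rw [← ENNReal.ofReal_one, ← ENNReal.ofReal_add (by linarith) (by norm_num)]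
        exact ENNReal.ofReal_le_ofReal (by linarith)
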